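/- For every n ≥ 2, the graph K_{n,n} minus a perfect matching has a b-coloring with 2 colors and a b-coloring with n colors. -/

import Mathlib

def IsBVertex {V : Type*} (G : SimpleGraph V) {k : ℕ} (ψ : V → Fin k) (u : V) : Prop :=
  ∀ c : Fin k, c ≠ ψ u → ∃ v, G.Adj u v ∧ ψ v = c

def IsBColoring {V : Type*} (G : SimpleGraph V) (k : ℕ) (ψ : V → Fin k) : Prop :=
  (∀ u v, G.Adj u v → ψ u ≠ ψ v) ∧ ∀ c : Fin k, ∃ u, ψ u = c ∧ IsBVertex G ψ u

noncomputable def bChromaticNumber {V : Type*} [Fintype V] (G : SimpleGraph V) : ℕ :=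
  sSup {k | ∃ ψ : V → Fin k, IsBColoring G k ψ}

/-- `K_{n,n}` minus a perfect matching: `a i` is adjacent to `b j` iff `i ≠ j`. -/
def crownGraph (n : ℕ) : SimpleGraph (Fin n ⊕ Fin n) where
  Adj x y := ∃ i j : Fin n, i ≠ j ∧
    ((x = Sum.inl i ∧ y = Sum.inr j) ∨ (x = Sum.inr j ∧ y = Sum.inl i))
  symm := by
    constructor
    rintro x y ⟨i, j, hij, h | h⟩ <;> exact ⟨i, j, hij, by tauto⟩
  loopless := by
    constructor
    rintro x ⟨i, j, hij, ⟨h1, h2⟩ | ⟨h1, h2⟩⟩ <;> simp_all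

lemma crown_adj {n : ℕ} {i j : Fin n} (h : i ≠ j) :
    (crownGraph n).Adj (Sum.inl i) (Sum.inr j) :=
  ⟨i, j, h, Or.inl ⟨rfl, rfl⟩⟩

lemma crown_adj' {n : ℕ} {i j : Fin n} (h : i ≠ j) :
    (crownGraph n).Adj (Sum.inr j) (Sum.inl i) :=
  ⟨i, j, h, Or.inr ⟨rfl, rfl⟩⟩

theorem stmt14 (n : ℕ) (hn : 2 ≤ n) :
    (∃ ψ : (Fin n ⊕ Fin n) → Fin 2, IsBColoring (crownGraph n) 2 ψ) ∧
    (∃ ψ : (Fin n ⊕ Fin n) → Fin n, IsBColoring (crownGraph n) n ψ) := by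
  have h0 : (0 : ℕ) < n := by omega
  have h1 : (1 : ℕ) < n := by omega
  set z : Fin n := ⟨0, h0⟩
  set o : Fin n := ⟨1, h1⟩
  have hzo : z ≠ o := by simp [z, o, Fin.ext_iff]
  constructor
  · refine ⟨Sum.elim (fun _ => 0) (fun _ => 1), ?_, ?_⟩
    · rintro x y ⟨i, j, hij, ⟨rfl, rfl⟩ | ⟨rfl, rfl⟩⟩ <;> simp
    · intro c
      fin_cases c
      · refine ⟨Sum.inl z, rfl, ?_⟩
        intro c hc
        refine ⟨Sum.inr o, crown_adj hzo, ?_⟩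
        simp at hc ⊢
        omega
      · refine ⟨Sum.inr z, rfl, ?_⟩
        intro c hc
        refine ⟨Sum.inl o, crown_adj' (Ne.symm hzo), ?_⟩
        simp at hc ⊢
        omega
  · refine ⟨Sum.elim id id, ?_, ?_⟩
    · rintro x y ⟨i, j, hij, ⟨rfl, rfl⟩ | ⟨rfl, rfl⟩⟩ <;> simp <;> tauto
    · intro c
      refine ⟨Sum.inl c, rfl, ?_⟩
      intro d hd
      exact ⟨Sum.inr d, crown_adj (by simpa using (hd).symm), rfl⟩
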